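/- arXiv:2103.02430 — 4 statements merged into one kernel-verified Lean document; each statement's English description precedes it below -/
import Mathlib

section
/- Let D = {(x_t,y_t) : t = 1,…,T} ⊆ ℝ^n × ℝ^n be a finite set with associated matrices X, Y ∈ ℝ^{n×T} and Z, W ∈ ℝ^{ℓ×n}. Then the null-controllable sets of the minimal and maximal linear processes associated with H_D satisfy N(L_-(H_D)) = (Z^{-1}W)^n({0}) and N(L_+(H_D)) = (XY^{-1})^n({0}), where the iterates are of the set-valued maps S ↦ Z^{-1}(WS) and S ↦ X(Y^{-1}S) applied n times to {0}. -/
open Matrix Set Pointwise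

/-- A set-valued map from `ℝ^n` to subsets of `ℝ^n`. -/
abbrev SVMap (n : ℕ) := (Fin n → ℝ) → Set (Fin n → ℝ)

/-- The graph of a set-valued map. -/
def graphOf {n : ℕ} (H : SVMap n) : Set ((Fin n → ℝ) × (Fin n → ℝ)) :=
  {p | p.2 ∈ H p.1}

/-- The set-valued map associated with a graph. -/
def ofGraph {n : ℕ} (G : Set ((Fin n → ℝ) × (Fin n → ℝ))) : SVMap n :=
  fun x => {y | (x, y) ∈ G}

/-- A convex cone: a nonempty convex set closed under nonnegative scalar multiplication. -/
def IsConvexCone {V : Type*} [AddCommGroup V] [Module ℝ V] (C : Set V) : Prop :=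
  C.Nonempty ∧ Convex ℝ C ∧ ∀ c : ℝ, 0 ≤ c → ∀ x ∈ C, c • x ∈ C

/-- A convex process: a set-valued map whose graph is a convex cone. -/
def IsConvexProcess {n : ℕ} (H : SVMap n) : Prop :=
  IsConvexCone (graphOf H)

/-- A linear process: a set-valued map whose graph is a linear subspace. -/
def IsLinearProcess {n : ℕ} (H : SVMap n) : Prop :=
  ∃ S : Submodule ℝ ((Fin n → ℝ) × (Fin n → ℝ)), graphOf H = (S : Set _)

/-- The domain of a set-valued map. -/
def domOf {n : ℕ} (H : SVMap n) : Set (Fin n → ℝ) := {x | (H x).Nonempty}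

/-- The image of a set-valued map. -/
def imOf {n : ℕ} (H : SVMap n) : Set (Fin n → ℝ) := {y | ∃ x, y ∈ H x}

/-- The reachable set: states reachable from the origin by a finite trajectory. -/
def reachSet {n : ℕ} (H : SVMap n) : Set (Fin n → ℝ) :=
  {ξ | ∃ (q : ℕ) (x : ℕ → (Fin n → ℝ)),
    x 0 = 0 ∧ x q = ξ ∧ ∀ k, k < q → x (k + 1) ∈ H (x k)}

/-- The null-controllable set: states steered to the origin by a finite trajectory. -/
def nullSet {n : ℕ} (H : SVMap n) : Set (Fin n → ℝ) :=
  {ξ | ∃ (q : ℕ) (x : ℕ → (Fin n → ℝ)),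
    x 0 = ξ ∧ x q = 0 ∧ ∀ k, k < q → x (k + 1) ∈ H (x k)}

/-- The feasible set: states from which an infinite trajectory emanates. -/
def feasSet {n : ℕ} (H : SVMap n) : Set (Fin n → ℝ) :=
  {ξ | ∃ x : ℕ → (Fin n → ℝ), x 0 = ξ ∧ ∀ k, x (k + 1) ∈ H (x k)}

/-- `H` is reachable if every feasible state is reachable. -/
def IsReachable {n : ℕ} (H : SVMap n) : Prop := feasSet H ⊆ reachSet H

/-- `H` is null-controllable if every feasible state is null-controllable. -/
def IsNullControllable {n : ℕ} (H : SVMap n) : Prop := feasSet H ⊆ nullSet H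

/-- The minimal linear process `L_-` associated with `H`: graph `L_- = lin(graph H) = (-graph H) ∩ graph H`. -/
def Lminus {n : ℕ} (H : SVMap n) : SVMap n := ofGraph ((-(graphOf H)) ∩ graphOf H)

/-- The maximal linear process `L_+` associated with `H`: graph `L_+ = Lin(graph H) = graph H - graph H`. -/
def Lplus {n : ℕ} (H : SVMap n) : SVMap n := ofGraph (graphOf H - graphOf H)

/-- The negative dual process: `p ∈ H^-(q)` iff `⟨p,x⟩ ≥ ⟨q,y⟩` for all `(x,y) ∈ graph H`. -/
def dualNeg {n : ℕ} (H : SVMap n) : SVMap n :=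
  fun q => {p | ∀ x y, y ∈ H x → q ⬝ᵥ y ≤ p ⬝ᵥ x}

/-- The positive dual process: `p ∈ H^+(q)` iff `⟨p,x⟩ ≤ ⟨q,y⟩` for all `(x,y) ∈ graph H`. -/
def dualPos {n : ℕ} (H : SVMap n) : SVMap n :=
  fun q => {p | ∀ x y, y ∈ H x → p ⬝ᵥ x ≤ q ⬝ᵥ y}

/-- `(lam, ξ)` is an eigenpair of `G` if `ξ ≠ 0` and `lam • ξ ∈ G(ξ)`. -/
def IsEigenpair {n : ℕ} (G : SVMap n) (lam : ℝ) (ξ : Fin n → ℝ) : Prop :=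
  ξ ≠ 0 ∧ lam • ξ ∈ G ξ

/-- The conic hull: all conic (nonnegative) combinations of elements of `S`. -/
def coneHull {V : Type*} [AddCommGroup V] [Module ℝ V] (S : Set V) : Set V :=
  {x | ∃ (k : ℕ) (c : Fin k → ℝ) (f : Fin k → V),
    (∀ i, 0 ≤ c i) ∧ (∀ i, f i ∈ S) ∧ x = ∑ i, c i • f i}

/-- The most powerful unfalsified process `H_D`: the convex process with graph `cone D`. -/
def mpup {n : ℕ} (D : Set ((Fin n → ℝ) × (Fin n → ℝ))) : SVMap n := ofGraph (coneHull D)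

/-- The inner product on `ℝ^n × ℝ^n`. -/
def pairDot {n : ℕ} (p q : (Fin n → ℝ) × (Fin n → ℝ)) : ℝ := p.1 ⬝ᵥ q.1 + p.2 ⬝ᵥ q.2

/-- The positive polar cone of a subset of `ℝ^n × ℝ^n`. -/
def polarPos {n : ℕ} (C : Set ((Fin n → ℝ) × (Fin n → ℝ))) :
    Set ((Fin n → ℝ) × (Fin n → ℝ)) :=
  {η | ∀ d ∈ C, 0 ≤ pairDot d η}

/-- The negative polar cone of a subset of `ℝ^n × ℝ^n`. -/
def polarNeg {n : ℕ} (C : Set ((Fin n → ℝ) × (Fin n → ℝ))) :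
    Set ((Fin n → ℝ) × (Fin n → ℝ)) :=
  {η | ∀ d ∈ C, pairDot d η ≤ 0}

/-- The data set `D = {(x_t, y_t)}` whose elements are the column pairs of `X` and `Y`. -/
def colPairs {n T : ℕ} (X Y : Matrix (Fin n) (Fin T) ℝ) :
    Set ((Fin n → ℝ) × (Fin n → ℝ)) :=
  {p | ∃ t : Fin T, p = (fun i => X i t, fun i => Y i t)}

/-- The rows of the matrix `[Z −W]`, viewed as pairs `(z_i, -w_i)` in `ℝ^n × ℝ^n`. -/
def rowPairsZW {m n : ℕ} (Z W : Matrix (Fin m) (Fin n) ℝ) :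
    Set ((Fin n → ℝ) × (Fin n → ℝ)) :=
  {p | ∃ i : Fin m, p = (fun j => Z i j, fun j => -W i j)}

/-- `X ℝ_+^T`: the image of the nonnegative orthant under `X`. -/
def posImage {n T : ℕ} (X : Matrix (Fin n) (Fin T) ℝ) : Set (Fin n → ℝ) :=
  {x | ∃ v : Fin T → ℝ, (∀ t, 0 ≤ v t) ∧ x = X *ᵥ v}

/-- The set-valued map `S ↦ W^{-1}(Z S)`. -/
def mapWiZ {m n : ℕ} (Z W : Matrix (Fin m) (Fin n) ℝ) :
    Set (Fin n → ℝ) → Set (Fin n → ℝ) :=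
  fun S => {y | ∃ x ∈ S, W *ᵥ y = Z *ᵥ x}

/-- The set-valued map `S ↦ Z^{-1}(W S)`. -/
def mapZiW {m n : ℕ} (Z W : Matrix (Fin m) (Fin n) ℝ) :
    Set (Fin n → ℝ) → Set (Fin n → ℝ) :=
  fun S => {y | ∃ x ∈ S, Z *ᵥ y = W *ᵥ x}

/-- The set-valued map `S ↦ Y(X^{-1} S)`. -/
def mapYXi {n T : ℕ} (X Y : Matrix (Fin n) (Fin T) ℝ) :
    Set (Fin n → ℝ) → Set (Fin n → ℝ) :=
  fun S => {y | ∃ v : Fin T → ℝ, X *ᵥ v ∈ S ∧ y = Y *ᵥ v}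

/-- The set-valued map `S ↦ X(Y^{-1} S)`. -/
def mapXYi {n T : ℕ} (X Y : Matrix (Fin n) (Fin T) ℝ) :
    Set (Fin n → ℝ) → Set (Fin n → ℝ) :=
  fun S => {y | ∃ v : Fin T → ℝ, Y *ᵥ v ∈ S ∧ y = X *ᵥ v}

/-- The image of a set under a set-valued map. -/
def imageSV {n : ℕ} (H : SVMap n) (S : Set (Fin n → ℝ)) : Set (Fin n → ℝ) :=
  {y | ∃ x ∈ S, y ∈ H x}

/-- The inverse of a set-valued map. -/
def invSV {n : ℕ} (H : SVMap n) : SVMap n := fun y => {x | y ∈ H x}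

/-- The linear map `(a, b) ↦ (b, -a)` on `ℝ^n × ℝ^n`. -/
def flipMap {n : ℕ} : ((Fin n → ℝ) × (Fin n → ℝ)) → ((Fin n → ℝ) × (Fin n → ℝ)) :=
  fun p => (p.2, -p.1)

/-- The orthogonal complement of a subset of `ℝ^n × ℝ^n`. -/
def orthPair {n : ℕ} (C : Set ((Fin n → ℝ) × (Fin n → ℝ))) :
    Set ((Fin n → ℝ) × (Fin n → ℝ)) :=
  {q | ∀ p ∈ C, pairDot p q = 0}

/-- The dual linear process `L^⊥`, with graph `{(b, -a) : (a, b) ∈ (graph L)^⊥}`. -/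
def perpProcess {n : ℕ} (L : SVMap n) : SVMap n :=
  ofGraph (flipMap '' orthPair (graphOf L))

/-- The orthogonal complement of a subset of `ℝ^n`. -/
def orthVec {n : ℕ} (S : Set (Fin n → ℝ)) : Set (Fin n → ℝ) :=
  {x | ∀ y ∈ S, x ⬝ᵥ y = 0}

section ConeHull

variable {V : Type*} [AddCommGroup V] [Module ℝ V] {S : Set V}

lemma mem_coneHull_of_fintype {ι : Type*} [Fintype ι] (c : ι → ℝ) (f : ι → V)
    (hc : ∀ i, 0 ≤ c i) (hf : ∀ i, f i ∈ S) : ∑ i, c i • f i ∈ coneHull S := by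
  let e := Fintype.equivFin ι
  have h : ∑ i, c i • f i = ∑ j, (c ∘ e.symm) j • (f ∘ e.symm) j :=
    Fintype.sum_equiv e (fun i => c i • f i) (fun j => (c ∘ e.symm) j • (f ∘ e.symm) j)
      (fun i => by simp)
  exact ⟨Fintype.card ι, c ∘ e.symm, f ∘ e.symm, fun i => hc _, fun i => hf _, h⟩

lemma coneHull_zero_mem : (0 : V) ∈ coneHull S :=
  ⟨0, Fin.elim0, Fin.elim0, fun i => i.elim0, fun i => i.elim0, by simp⟩

lemma subset_coneHull : S ⊆ coneHull S := fun x hx =>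
  ⟨1, fun _ => 1, fun _ => x, fun _ => zero_le_one, fun _ => hx, by simp⟩

lemma coneHull_add {x y : V} (hx : x ∈ coneHull S) (hy : y ∈ coneHull S) :
    x + y ∈ coneHull S := by
  obtain ⟨k, c, f, hc, hf, rfl⟩ := hx
  obtain ⟨l, d, g, hd, hg, rfl⟩ := hy
  refine ⟨k + l, Fin.append c d, Fin.append f g, ?_, ?_, ?_⟩
  · exact Fin.addCases (fun j => by simp [Fin.append_left, hc])
      (fun j => by simp [Fin.append_right, hd])
  · exact Fin.addCases (fun j => by simp [Fin.append_left, hf])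
      (fun j => by simp [Fin.append_right, hg])
  · rw [Fin.sum_univ_add]
    simp [Fin.append_left, Fin.append_right]

lemma coneHull_smul {x : V} {t : ℝ} (ht : 0 ≤ t) (hx : x ∈ coneHull S) :
    t • x ∈ coneHull S := by
  obtain ⟨k, c, f, hc, hf, rfl⟩ := hx
  exact ⟨k, fun i => t * c i, f, fun i => mul_nonneg ht (hc i), hf, by
    rw [Finset.smul_sum]; simp [smul_smul]⟩

lemma image_coneHull {W : Type*} [AddCommGroup W] [Module ℝ W] (g : V →ₗ[ℝ] W) (S : Set V) :
    g '' coneHull S = coneHull (g '' S) := by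
  ext y
  constructor
  · rintro ⟨x, ⟨k, c, f, hc, hf, rfl⟩, rfl⟩
    exact ⟨k, c, g ∘ f, hc, fun i => ⟨f i, hf i, rfl⟩, by simp [map_sum]⟩
  · rintro ⟨k, c, f, hc, hf, rfl⟩
    choose u hu hgu using hf
    refine ⟨∑ i, c i • u i, ⟨k, c, u, hc, hu, rfl⟩, ?_⟩
    simp [map_sum, hgu]

end ConeHull

section Caratheodory

variable {V : Type*} [AddCommGroup V] [Module ℝ V] {S : Set V}

lemma cone_reduce : ∀ (k : ℕ) (c : Fin k → ℝ) (f : Fin k → V), (∀ i, 0 ≤ c i) →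
    ∃ (l : ℕ) (d : Fin l → ℝ) (g : Fin l → V), (∀ i, 0 ≤ d i) ∧ (∀ i, g i ∈ Set.range f) ∧
      LinearIndependent ℝ g ∧ ∑ i, d i • g i = ∑ i, c i • f i := by
  intro k
  induction k using Nat.strong_induction_on with
  | _ k IH =>
    intro c f hc
    by_cases hli : LinearIndependent ℝ f
    · exact ⟨k, c, f, hc, fun i => ⟨i, rfl⟩, hli, rfl⟩
    · obtain ⟨g, hg0, i₁, hi₁⟩ := Fintype.not_linearIndependent_iff.mp hli
      -- WLOG some coefficient of g is positive
      have : ∃ g : Fin k → ℝ, ∑ i, g i • f i = 0 ∧ ∃ i, 0 < g i := by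
        rcases lt_trichotomy (g i₁) 0 with h | h | h
        · exact ⟨-g, by simpa using hg0, i₁, by simpa using h⟩
        · exact absurd h hi₁
        · exact ⟨g, hg0, i₁, h⟩
      obtain ⟨g, hg0, ipos⟩ := this
      classical
      have hP : (Finset.univ.filter (fun i => 0 < g i)).Nonempty := by
        obtain ⟨i, hi⟩ := ipos
        exact ⟨i, by simpa using hi⟩
      obtain ⟨i₀, hi₀mem, hi₀min⟩ :=
        Finset.exists_min_image _ (fun i => c i / g i) hP
      have hgi₀ : 0 < g i₀ := by simpa using hi₀mem
      set t : ℝ := c i₀ / g i₀ with ht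
      have ht0 : 0 ≤ t := div_nonneg (hc i₀) hgi₀.le
      set c' : Fin k → ℝ := fun i => c i - t * g i with hc'
      have hc'0 : ∀ i, 0 ≤ c' i := by
        intro i
        by_cases hgi : 0 < g i
        · have := hi₀min i (by simpa using hgi)
          have : t * g i ≤ c i := by
            rw [← le_div_iff₀ hgi]; exact this
          simpa [hc'] using this
        · push_neg at hgi
          have : t * g i ≤ 0 := mul_nonpos_of_nonneg_of_nonpos ht0 hgi
          have := le_trans this (hc i)
          simpa [hc'] using this
      have hc'i₀ : c' i₀ = 0 := by
        simp [hc', ht, div_mul_cancel₀ _ hgi₀.ne']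
      have hsum : ∑ i, c' i • f i = ∑ i, c i • f i := by
        simp only [hc', sub_smul, Finset.sum_sub_distrib]
        have : ∑ x : Fin k, (t * g x) • f x = t • ∑ i, g i • f i := by
          rw [Finset.smul_sum]; simp [smul_smul]
        rw [this, hg0, smul_zero, sub_zero]
      -- k must be positive
      rcases k with _ | k'
      · exact absurd i₀.2 (by simp)
      · obtain ⟨l, d, g', hd, hrange, hli', hsum'⟩ :=
          IH k' (Nat.lt_succ_self k') (c' ∘ i₀.succAbove) (f ∘ i₀.succAbove)
            (fun i => hc'0 _)
        refine ⟨l, d, g', hd, ?_, hli', ?_⟩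
        · intro i
          obtain ⟨j, hj⟩ := hrange i
          exact ⟨i₀.succAbove j, hj⟩
        · rw [hsum', ← hsum, Fin.sum_univ_succAbove (fun i => c' i • f i) i₀,
            hc'i₀, zero_smul, zero_add]
          rfl

end Caratheodory

section Closed

variable {E : Type*} [NormedAddCommGroup E] [NormedSpace ℝ E]

lemma isClosed_cone_of_linIndep {ι : Type*} [Fintype ι] {f : ι → E}
    (hf : LinearIndependent ℝ f) :
    IsClosed {x : E | ∃ c : ι → ℝ, (∀ i, 0 ≤ c i) ∧ x = ∑ i, c i • f i} := by
  set T : (ι → ℝ) →ₗ[ℝ] E := Fintype.linearCombination ℝ f with hT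
  have hker : LinearMap.ker T = ⊥ := by
    rw [LinearMap.ker_eq_bot']
    intro c hc
    have := Fintype.linearIndependent_iff.mp hf c (by simpa [hT, Fintype.linearCombination_apply] using hc)
    funext i; exact this i
  have hemb : Topology.IsClosedEmbedding T := LinearMap.isClosedEmbedding_of_injective hker
  have horth : IsClosed {c : ι → ℝ | ∀ i, 0 ≤ c i} := by
    have : {c : ι → ℝ | ∀ i, 0 ≤ c i} = Set.pi Set.univ (fun _ => Set.Ici (0:ℝ)) := by
      ext c; simp [Set.mem_pi, Pi.le_def]
    rw [this]
    exact isClosed_set_pi (fun i _ => isClosed_Ici)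
  have : {x : E | ∃ c : ι → ℝ, (∀ i, 0 ≤ c i) ∧ x = ∑ i, c i • f i} =
      T '' {c : ι → ℝ | ∀ i, 0 ≤ c i} := by
    ext x
    constructor
    · rintro ⟨c, hc, rfl⟩; exact ⟨c, hc, rfl⟩
    · rintro ⟨c, hc, rfl⟩; exact ⟨c, hc, rfl⟩
  rw [this]
  exact hemb.isClosedMap _ horth

lemma isClosed_coneHull_of_finite [FiniteDimensional ℝ E] {S : Set E} (hS : S.Finite) :
    IsClosed (coneHull S) := by
  classical
  -- cone hull is the union over linearly independent finsets contained in S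
  have key : coneHull S = ⋃ t ∈ {t : Finset E | ↑t ⊆ S ∧ LinearIndependent ℝ ((↑) : ↑(↑t : Set E) → E)},
      {x : E | ∃ c : (↑(↑t : Set E) : Type _) → ℝ, (∀ i, 0 ≤ c i) ∧ x = ∑ i, c i • (i : E)} := by
    ext x
    simp only [Set.mem_iUnion, Set.mem_setOf_eq]
    constructor
    · rintro ⟨k, c, f, hc, hf, rfl⟩
      obtain ⟨l, d, g, hd, hrange, hli, hsum⟩ := cone_reduce k c f hc
      set t : Finset E := Finset.image g Finset.univ with htdef
      have hts : (↑t : Set E) = Set.range g := by simp [htdef]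
      have htS : (↑t : Set E) ⊆ S := by
        rw [hts]; rintro y ⟨i, rfl⟩
        obtain ⟨j, hj⟩ := hrange i
        rw [← hj]; exact hf j
      have hli' : LinearIndependent ℝ ((↑) : ↑(↑t : Set E) → E) := by
        rw [hts]; exact (linearIndepOn_id_range_iff hli.injective).mpr hli
      refine ⟨t, ⟨htS, hli'⟩, ?_⟩
      -- collapse to coefficients indexed by ↑t
      set c' : ↑(↑t : Set E) → ℝ :=
        fun v => ∑ i ∈ Finset.univ.filter (fun i => g i = (v : E)), d i with hc'
      refine ⟨c', fun v => Finset.sum_nonneg (fun i _ => hd i), ?_⟩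
      rw [← hsum]
      have hmaps : ∀ i ∈ Finset.univ, (⟨g i, by rw [hts]; exact ⟨i, rfl⟩⟩ : ↑(↑t : Set E)) ∈
          (Finset.univ : Finset ↑(↑t : Set E)) := fun _ _ => Finset.mem_univ _
      rw [show ∑ i, d i • g i = ∑ v : ↑(↑t : Set E), c' v • (v : E) from ?_]
      · rw [hc']
        simp only [Finset.sum_smul]
        rw [← Finset.sum_fiberwise_of_maps_to hmaps (fun i => d i • g i)]
        congr 1
        ext v
        refine Finset.sum_congr ?_ (fun i hi => ?_)
        · ext i; simp [Subtype.ext_iff]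
        · simp only [Finset.mem_filter] at hi
          rw [hi.2]
    · rintro ⟨t, ⟨htS, hli⟩, c, hc, rfl⟩
      exact mem_coneHull_of_fintype c (fun v => (v : E)) hc (fun v => htS v.2)
  rw [key]
  have hfin : {t : Finset E | ↑t ⊆ S ∧ LinearIndependent ℝ ((↑) : ↑(↑t : Set E) → E)}.Finite := by
    apply Set.Finite.subset ((hS.finite_subsets.preimage
      (Set.injOn_of_injective Finset.coe_injective)))
    intro t ht; exact ht.1
  exact hfin.isClosed_biUnion (fun t ht => isClosed_cone_of_linIndep ht.2)

end Closed

section Bipolar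

variable {N : ℕ}

lemma pairDot_comm (p q : (Fin N → ℝ) × (Fin N → ℝ)) : pairDot p q = pairDot q p := by
  simp [pairDot, dotProduct_comm]

lemma pairDot_add_left (p q r : (Fin N → ℝ) × (Fin N → ℝ)) :
    pairDot (p + q) r = pairDot p r + pairDot q r := by
  simp [pairDot, add_dotProduct]; ring

lemma pairDot_smul_left (c : ℝ) (p r : (Fin N → ℝ) × (Fin N → ℝ)) :
    pairDot (c • p) r = c * pairDot p r := by
  simp [pairDot, smul_dotProduct, smul_eq_mul]; ring

lemma pairDot_neg_left (p r : (Fin N → ℝ) × (Fin N → ℝ)) :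
    pairDot (-p) r = -pairDot p r := by
  simp [pairDot, neg_dotProduct]; ring

/-- The identification of pairs with the Euclidean space on `Fin N ⊕ Fin N`. -/
noncomputable def pairEquiv : ((Fin N → ℝ) × (Fin N → ℝ)) ≃ₗ[ℝ] EuclideanSpace ℝ (Fin N ⊕ Fin N) where
  toFun p := (WithLp.equiv 2 _).symm (Sum.elim p.1 p.2)
  invFun q := (fun i => q (Sum.inl i), fun i => q (Sum.inr i))
  left_inv p := by rfl
  right_inv q := by
    ext i; cases i <;> rfl
  map_add' p q := by
    ext i; cases i <;> rfl
  map_smul' c p := by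
    ext i; cases i <;> rfl

lemma inner_pairEquiv (p q : (Fin N → ℝ) × (Fin N → ℝ)) :
    (inner ℝ (pairEquiv p) (pairEquiv q) : ℝ) = pairDot p q := by
  rw [PiLp.inner_apply]
  simp only [RCLike.inner_apply, starRingEnd_apply, star_trivial]
  rw [Fintype.sum_sum_type]
  show ∑ a, q.1 a * p.1 a + ∑ a, q.2 a * p.2 a = _
  simp only [pairDot, dotProduct, mul_comm]

lemma mem_coneHull_of_polar {D : Set ((Fin N → ℝ) × (Fin N → ℝ))} (hD : D.Finite)
    {p : (Fin N → ℝ) × (Fin N → ℝ)} (hp : ∀ η ∈ polarPos D, 0 ≤ pairDot η p) :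
    p ∈ coneHull D := by
  set e := (pairEquiv (N := N))
  set S : Set (EuclideanSpace ℝ (Fin N ⊕ Fin N)) := ⇑e '' D with hSdef
  have hS : S.Finite := hD.image _
  set K : ProperCone ℝ (EuclideanSpace ℝ (Fin N ⊕ Fin N)) :=
    { carrier := coneHull S
      add_mem' := fun hx hy => coneHull_add hx hy
      zero_mem' := coneHull_zero_mem
      smul_mem' := fun c x hx => coneHull_smul c.2 hx
      isClosed' := isClosed_coneHull_of_finite hS } with hK
  have hKcone : (K : Set _) = coneHull S := rfl
  have hbipolar := ProperCone.innerDual_innerDual K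
  have hmem : e p ∈ ProperCone.innerDual
      (↑(ProperCone.innerDual (K : Set (EuclideanSpace ℝ (Fin N ⊕ Fin N)))) :
        Set (EuclideanSpace ℝ (Fin N ⊕ Fin N))) := by
    rw [ProperCone.mem_innerDual]
    intro y hy
    have hy' : ∀ z ∈ (K : Set _), 0 ≤ (inner ℝ z y : ℝ) :=
      fun z hz => (ProperCone.mem_innerDual.mp hy) hz
    set η := e.symm y with hη
    have hey : e η = y := e.apply_symm_apply y
    have hηpolar : η ∈ polarPos D := by
      intro d hd
      have : 0 ≤ (inner ℝ (e d) y : ℝ) :=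
        hy' (e d) (subset_coneHull (⟨d, hd, rfl⟩ : e d ∈ S))
      rw [← hey, inner_pairEquiv] at this
      exact this
    have := hp η hηpolar
    rw [← inner_pairEquiv, hey] at this
    exact this
  rw [hbipolar] at hmem
  have hthis : e p ∈ coneHull S := hmem
  have himg : ⇑e '' coneHull D = coneHull S := image_coneHull (e.toLinearMap) D
  rw [← himg] at hthis
  obtain ⟨p', hp', hpe⟩ := hthis
  have : p' = p := e.injective hpe
  rwa [← this]

/-- `pairDot` of an element of the cone hull against an element of the polar is nonneg. -/
lemma pairDot_nonneg_of_mem_coneHull {D : Set ((Fin N → ℝ) × (Fin N → ℝ))}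
    {d η : (Fin N → ℝ) × (Fin N → ℝ)} (hd : d ∈ coneHull D) (hη : η ∈ polarPos D) :
    0 ≤ pairDot d η := by
  obtain ⟨k, c, f, hc, hf, rfl⟩ := hd
  have : pairDot (∑ i, c i • f i) η = ∑ i, c i * pairDot (f i) η := by
    induction' (Finset.univ : Finset (Fin k)) using Finset.induction with a s ha ih
    · simp [pairDot]
    · rw [Finset.sum_insert ha, Finset.sum_insert ha, pairDot_add_left, pairDot_smul_left, ih]
  rw [this]
  exact Finset.sum_nonneg fun i _ => mul_nonneg (hc i) (hη _ (hf i))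

/-- If `p` is orthogonal to every element of `G`, it is orthogonal to the cone hull. -/
lemma pairDot_eq_zero_of_mem_coneHull {G : Set ((Fin N → ℝ) × (Fin N → ℝ))}
    {η p : (Fin N → ℝ) × (Fin N → ℝ)} (hη : η ∈ coneHull G)
    (hp : ∀ r ∈ G, pairDot r p = 0) : pairDot η p = 0 := by
  obtain ⟨k, c, f, hc, hf, rfl⟩ := hη
  have : pairDot (∑ i, c i • f i) p = ∑ i, c i * pairDot (f i) p := by
    induction' (Finset.univ : Finset (Fin k)) using Finset.induction with a s ha ih
    · simp [pairDot]
    · rw [Finset.sum_insert ha, Finset.sum_insert ha, pairDot_add_left, pairDot_smul_left, ih]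
  rw [this]
  exact Finset.sum_eq_zero fun i _ => by rw [hp _ (hf i), mul_zero]

end Bipolar

section NullSet

/-- One-step preimage of a set under the relation with graph `G`. -/
def preRel {n : ℕ} (G : Set ((Fin n → ℝ) × (Fin n → ℝ))) (S : Set (Fin n → ℝ)) :
    Set (Fin n → ℝ) := {a | ∃ b ∈ S, (a, b) ∈ G}

lemma nullSet_eq_iUnion {n : ℕ} (H : SVMap n) :
    nullSet H = ⋃ q, (preRel (graphOf H))^[q] {0} := by
  have key : ∀ (q : ℕ) (ξ : Fin n → ℝ), ξ ∈ (preRel (graphOf H))^[q] {0} ↔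
      ∃ x : ℕ → (Fin n → ℝ), x 0 = ξ ∧ x q = 0 ∧ ∀ k, k < q → x (k + 1) ∈ H (x k) := by
    intro q
    induction q with
    | zero =>
      intro ξ
      simp only [Function.iterate_zero, id_eq, Set.mem_singleton_iff]
      constructor
      · rintro rfl
        exact ⟨fun _ => 0, rfl, rfl, fun k hk => absurd hk (Nat.not_lt_zero k)⟩
      · rintro ⟨x, h0, hq, -⟩
        rw [← h0]; exact hq
    | succ q ih =>
      intro ξ
      rw [Function.iterate_succ_apply']
      constructor
      · rintro ⟨b, hb, hξb⟩
        obtain ⟨y, hy0, hyq, hystep⟩ := (ih b).mp hb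
        refine ⟨fun k => Nat.casesOn k ξ y, rfl, hyq, ?_⟩
        intro k hk
        cases k with
        | zero => simpa [hy0, graphOf] using hξb
        | succ k => exact hystep k (by omega)
      · rintro ⟨x, rfl, hxq, hstep⟩
        exact ⟨x 1, (ih (x 1)).mpr ⟨fun k => x (k + 1), rfl, hxq,
          fun k hk => hstep (k + 1) (by omega)⟩, hstep 0 (by omega)⟩
  ext ξ
  simp only [nullSet, Set.mem_setOf_eq, Set.mem_iUnion]
  constructor
  · rintro ⟨q, x, h0, hq, hs⟩
    exact ⟨q, (key q ξ).mpr ⟨x, h0, hq, hs⟩⟩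
  · rintro ⟨q, h⟩
    obtain ⟨x, hx⟩ := (key q ξ).mp h
    exact ⟨q, x, hx⟩

lemma union_iterate_eq {n : ℕ} (G : Set (Fin n → ℝ) → Set (Fin n → ℝ))
    (F : Submodule ℝ (Fin n → ℝ) → Submodule ℝ (Fin n → ℝ)) (hmono : Monotone F)
    (hcomm : ∀ p : Submodule ℝ (Fin n → ℝ), G ↑p = ↑(F p)) :
    (⋃ q, G^[q] {0}) = G^[n] {0} := by
  have hGF : ∀ q, G^[q] {0} = ↑(F^[q] ⊥) := by
    intro q
    induction q with
    | zero => simp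
    | succ q ih => rw [Function.iterate_succ_apply', Function.iterate_succ_apply', ih, hcomm]
  have hchain : ∀ q, F^[q] ⊥ ≤ F^[q + 1] ⊥ := by
    intro q
    induction q with
    | zero => exact bot_le
    | succ q ih =>
      rw [Function.iterate_succ_apply', Function.iterate_succ_apply']
      exact hmono ih
  have hmono2 : Monotone (fun q => F^[q] ⊥) := monotone_nat_of_le_succ hchain
  have hex : ∃ k ≤ n, F^[k] ⊥ = F^[k + 1] ⊥ := by
    by_contra h
    push_neg at h
    have hrank : ∀ k, k ≤ n + 1 → k ≤ Module.finrank ℝ ↥(F^[k] ⊥) := by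
      intro k
      induction k with
      | zero => intro _; exact Nat.zero_le _
      | succ k ihk =>
        intro hk
        have h1 : k ≤ Module.finrank ℝ ↥(F^[k] ⊥) := ihk (by omega)
        have h2 : F^[k] ⊥ < F^[k + 1] ⊥ :=
          lt_of_le_of_ne (hchain k) (h k (by omega))
        have := Submodule.finrank_lt_finrank_of_lt h2
        omega
    have h1 := hrank (n + 1) le_rfl
    have h2 : Module.finrank ℝ ↥(F^[n + 1] ⊥) ≤ n := by
      have := Submodule.finrank_le (F^[n + 1] ⊥)
      simpa [Module.finrank_fin_fun] using this
    omega
  obtain ⟨k, hkn, hk⟩ := hex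
  have hstable : ∀ q, k ≤ q → F^[q] ⊥ = F^[k] ⊥ := by
    intro q hq
    induction q, hq using Nat.le_induction with
    | base => rfl
    | succ q hq ihq =>
      rw [Function.iterate_succ_apply', ihq,
        show F (F^[k] ⊥) = F^[k + 1] ⊥ from (Function.iterate_succ_apply' F k ⊥).symm, ← hk]
  apply Set.Subset.antisymm
  · apply Set.iUnion_subset
    intro q
    rcases le_or_gt q n with h | h
    · rw [hGF q, hGF n]
      exact_mod_cast SetLike.coe_subset_coe.mpr (hmono2 h)
    · rw [hGF q, hGF n, hstable q (le_trans hkn h.le), hstable n hkn]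
  · exact Set.subset_iUnion (fun q => G^[q] {0}) n

end NullSet

section Graphs

variable {n T m : ℕ} (X Y : Matrix (Fin n) (Fin T) ℝ) (Z W : Matrix (Fin m) (Fin n) ℝ)

lemma sum_smul_colPair (v : Fin T → ℝ) :
    ∑ t, v t • ((fun i => X i t, fun i => Y i t) : (Fin n → ℝ) × (Fin n → ℝ)) =
      (X *ᵥ v, Y *ᵥ v) := by
  apply Prod.ext
  · rw [Prod.fst_sum]
    funext i
    simp only [Prod.smul_fst, Finset.sum_apply, Pi.smul_apply, smul_eq_mul]
    simp [Matrix.mulVec, dotProduct, mul_comm]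
  · rw [Prod.snd_sum]
    funext i
    simp only [Prod.smul_snd, Finset.sum_apply, Pi.smul_apply, smul_eq_mul]
    simp [Matrix.mulVec, dotProduct, mul_comm]

lemma coneHull_colPairs : coneHull (colPairs X Y) =
    {p : (Fin n → ℝ) × (Fin n → ℝ) |
      ∃ v : Fin T → ℝ, (∀ t, 0 ≤ v t) ∧ p = (X *ᵥ v, Y *ᵥ v)} := by
  classical
  ext p
  constructor
  · rintro ⟨k, c, f, hc, hf, rfl⟩
    choose ts hts using hf
    set v : Fin T → ℝ := fun t => ∑ i ∈ Finset.univ.filter (fun i => ts i = t), c i with hv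
    refine ⟨v, fun t => Finset.sum_nonneg (fun i _ => hc i), ?_⟩
    rw [← sum_smul_colPair]
    have hmaps : ∀ i ∈ Finset.univ, ts i ∈ (Finset.univ : Finset (Fin T)) :=
      fun _ _ => Finset.mem_univ _
    rw [← Finset.sum_fiberwise_of_maps_to hmaps (fun i => c i • f i)]
    refine Finset.sum_congr rfl (fun t _ => ?_)
    rw [hv]
    simp only [Finset.sum_smul]
    refine Finset.sum_congr rfl (fun i hi => ?_)
    simp only [Finset.mem_filter] at hi
    rw [hts i, hi.2]
  · rintro ⟨v, hv, rfl⟩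
    rw [← sum_smul_colPair]
    exact mem_coneHull_of_fintype v _ hv (fun t => ⟨t, rfl⟩)

lemma graph_Lplus : graphOf (Lplus (mpup (colPairs X Y))) =
    {p : (Fin n → ℝ) × (Fin n → ℝ) | ∃ v : Fin T → ℝ, p = (X *ᵥ v, Y *ᵥ v)} := by
  have hg : graphOf (Lplus (mpup (colPairs X Y))) =
      coneHull (colPairs X Y) - coneHull (colPairs X Y) := rfl
  rw [hg, coneHull_colPairs]
  ext p
  rw [Set.mem_sub]
  constructor
  · rintro ⟨a, ⟨v₁, hv₁, rfl⟩, b, ⟨v₂, hv₂, rfl⟩, rfl⟩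
    exact ⟨v₁ - v₂, by simp [Prod.ext_iff, Matrix.mulVec_sub]⟩
  · rintro ⟨v, rfl⟩
    refine ⟨(X *ᵥ fun t => max (v t) 0, Y *ᵥ fun t => max (v t) 0),
      ⟨fun t => max (v t) 0, fun t => le_max_right _ _, rfl⟩,
      (X *ᵥ fun t => max (-v t) 0, Y *ᵥ fun t => max (-v t) 0),
      ⟨fun t => max (-v t) 0, fun t => le_max_right _ _, rfl⟩, ?_⟩
    have hsplit : (fun t => max (v t) 0) - (fun t => max (-v t) 0) = v := by
      funext t
      simp only [Pi.sub_apply]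
      rcases le_total (v t) 0 with h | h
      · rw [max_eq_right h, max_eq_left (by linarith)]; ring
      · rw [max_eq_left h, max_eq_right (by linarith)]; ring
    rw [Prod.mk_sub_mk, ← Matrix.mulVec_sub, ← Matrix.mulVec_sub, hsplit]

lemma graph_Lminus (hZW : polarPos (colPairs X Y) = coneHull (rowPairsZW Z W)) :
    graphOf (Lminus (mpup (colPairs X Y))) =
      {p : (Fin n → ℝ) × (Fin n → ℝ) | Z *ᵥ p.1 = W *ᵥ p.2} := by
  have hg : graphOf (Lminus (mpup (colPairs X Y))) =
      (-(coneHull (colPairs X Y))) ∩ coneHull (colPairs X Y) := rfl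
  have hDfin : (colPairs X Y).Finite := by
    have : colPairs X Y = Set.range (fun t : Fin T =>
        ((fun i => X i t, fun i => Y i t) : (Fin n → ℝ) × (Fin n → ℝ))) := by
      ext p; simp [colPairs, Set.range, eq_comm]
    rw [this]; exact Set.finite_range _
  have hrow : ∀ i : Fin m,
      ((fun j => Z i j, fun j => -W i j) : (Fin n → ℝ) × (Fin n → ℝ)) ∈
        polarPos (colPairs X Y) := by
    intro i
    rw [hZW]
    exact subset_coneHull ⟨i, rfl⟩
  rw [hg]
  ext p
  constructor
  · rintro ⟨hneg, hpos⟩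
    rw [Set.mem_neg] at hneg
    funext i
    have h1 : 0 ≤ pairDot p ((fun j => Z i j, fun j => -W i j)) :=
      pairDot_nonneg_of_mem_coneHull hpos (hrow i)
    have h2 : 0 ≤ pairDot (-p) ((fun j => Z i j, fun j => -W i j)) :=
      pairDot_nonneg_of_mem_coneHull hneg (hrow i)
    rw [pairDot_neg_left] at h2
    have h3 : pairDot p ((fun j => Z i j, fun j => -W i j)) = 0 := le_antisymm (by linarith) h1
    have h4 : (Z *ᵥ p.1) i - (W *ᵥ p.2) i =
        pairDot p ((fun j => Z i j, fun j => -W i j)) := by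
      simp [pairDot, Matrix.mulVec, dotProduct, dotProduct_comm, mul_comm,
        sub_eq_add_neg, Finset.sum_neg_distrib]
    have := h4.trans h3
    linarith [this]
  · intro hp
    simp only [Set.mem_setOf_eq] at hp
    have horto : ∀ η ∈ polarPos (colPairs X Y), pairDot η p = 0 := by
      intro η hη
      rw [hZW] at hη
      refine pairDot_eq_zero_of_mem_coneHull hη (fun r hr => ?_)
      obtain ⟨i, rfl⟩ := hr
      have : pairDot ((fun j => Z i j, fun j => -W i j)) p =
          (Z *ᵥ p.1) i - (W *ᵥ p.2) i := by
        simp [pairDot, Matrix.mulVec, dotProduct, sub_eq_add_neg,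
          Finset.sum_neg_distrib]
      rw [this, hp, sub_self]
    constructor
    · rw [Set.mem_neg]
      apply mem_coneHull_of_polar hDfin
      intro η hη
      rw [pairDot_comm, pairDot_neg_left, pairDot_comm, horto η hη, neg_zero]
    · apply mem_coneHull_of_polar hDfin
      intro η hη
      rw [horto η hη]

end Graphs

/-- Null-controllable sets of the minimal and maximal linear processes of `H_D`:
`N(L_-(H_D)) = (Z^{-1}W)^n({0})` and `N(L_+(H_D)) = (XY^{-1})^n({0})`. -/
theorem stmt12 {n T m : ℕ} (X Y : Matrix (Fin n) (Fin T) ℝ) (Z W : Matrix (Fin m) (Fin n) ℝ)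
    (hZW : polarPos (colPairs X Y) = coneHull (rowPairsZW Z W)) :
    nullSet (Lminus (mpup (colPairs X Y))) = (mapZiW Z W)^[n] {0} ∧
    nullSet (Lplus (mpup (colPairs X Y))) = (mapXYi X Y)^[n] {0} := by
  constructor
  · rw [nullSet_eq_iUnion]
    have hg := graph_Lminus X Y Z W hZW
    have hpre : preRel (graphOf (Lminus (mpup (colPairs X Y)))) = mapZiW Z W := by
      funext S
      ext a
      simp only [preRel, hg, Set.mem_setOf_eq, mapZiW]
    rw [hpre]
    refine union_iterate_eq (mapZiW Z W)
      (fun p => Submodule.comap (Matrix.mulVecLin Z) (Submodule.map (Matrix.mulVecLin W) p))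
      (fun p q h => Submodule.comap_mono (Submodule.map_mono h)) (fun p => ?_)
    ext y
    simp only [mapZiW, Set.mem_setOf_eq, SetLike.mem_coe, Submodule.mem_comap,
      Submodule.mem_map, Matrix.mulVecLin_apply]
    constructor
    · rintro ⟨x, hx, hxy⟩; exact ⟨x, hx, hxy.symm⟩
    · rintro ⟨x, hx, hxy⟩; exact ⟨x, hx, hxy.symm⟩
  · rw [nullSet_eq_iUnion]
    have hg := graph_Lplus X Y
    have hpre : preRel (graphOf (Lplus (mpup (colPairs X Y)))) = mapXYi X Y := by
      funext S
      ext a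
      simp only [preRel, hg, Set.mem_setOf_eq, mapXYi, Prod.ext_iff]
      constructor
      · rintro ⟨b, hb, v, ha, hbv⟩; exact ⟨v, hbv ▸ hb, ha⟩
      · rintro ⟨v, hv, ha⟩; exact ⟨Y *ᵥ v, hv, v, ha, rfl⟩
    rw [hpre]
    refine union_iterate_eq (mapXYi X Y)
      (fun p => Submodule.map (Matrix.mulVecLin X) (Submodule.comap (Matrix.mulVecLin Y) p))
      (fun p q h => Submodule.map_mono (Submodule.comap_mono h)) (fun p => ?_)
    ext y
    simp only [mapXYi, Set.mem_setOf_eq, SetLike.mem_coe, Submodule.mem_map,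
      Submodule.mem_comap, Matrix.mulVecLin_apply]
    constructor
    · rintro ⟨v, hv, hy⟩; exact ⟨v, hv, hy.symm⟩
    · rintro ⟨v, hv, hy⟩; exact ⟨v, hv, hy.symm⟩
end

section
/- Let D = {(x_t,y_t) : t = 1,…,T} ⊆ ℝ^n × ℝ^n be a finite set with associated matrices X, Y ∈ ℝ^{n×T} and Z, W ∈ ℝ^{ℓ×n}. Then the negative dual process of H_D satisfies graph(H_D^-) = {(W^⊤v, Z^⊤v) : v ∈ ℝ_+^ℓ} = {(x,y) ∈ ℝ^n × ℝ^n : Y^⊤x − X^⊤y ∈ ℝ_-^T}, where ℝ_-^T is the nonpositive orthant. -/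
open Matrix Set Pointwise

lemma dot_sum_smul {n k : ℕ} (u : Fin n → ℝ) (c : Fin k → ℝ) (w : Fin k → Fin n → ℝ) :
    u ⬝ᵥ (∑ i, c i • w i) = ∑ i, c i * (u ⬝ᵥ w i) := by
  simp only [dotProduct, Finset.sum_apply, Pi.smul_apply, smul_eq_mul,
    Finset.mul_sum, Finset.sum_mul]
  rw [Finset.sum_comm]
  refine Finset.sum_congr rfl fun i _ => Finset.sum_congr rfl fun j _ => by ring

lemma mem_graph_dualNeg_iff {n : ℕ} (D : Set ((Fin n → ℝ) × (Fin n → ℝ)))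
    (p : (Fin n → ℝ) × (Fin n → ℝ)) :
    p ∈ graphOf (dualNeg (mpup D)) ↔ (p.2, -p.1) ∈ polarPos D := by
  constructor
  · intro h d hd
    have hmem : (d.1, d.2) ∈ coneHull D := by
      refine ⟨1, fun _ => 1, fun _ => d, fun _ => zero_le_one, fun _ => hd, ?_⟩
      simp
    have := h d.1 d.2 hmem
    simp only [pairDot, dotProduct_neg]
    have h1 : d.2 ⬝ᵥ p.1 = p.1 ⬝ᵥ d.2 := dotProduct_comm _ _
    have h2 : d.1 ⬝ᵥ p.2 = p.2 ⬝ᵥ d.1 := dotProduct_comm _ _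
    rw [h1, h2]; linarith
  · rintro h x y ⟨k, c, f, hc, hf, hxy⟩
    have hxy1 : x = ∑ i, c i • (f i).1 := by
      have := congrArg Prod.fst hxy; simpa [Prod.fst_sum] using this
    have hxy2 : y = ∑ i, c i • (f i).2 := by
      have := congrArg Prod.snd hxy; simpa [Prod.snd_sum] using this
    rw [hxy1, hxy2, dot_sum_smul, dot_sum_smul]
    apply Finset.sum_le_sum
    intro i _
    have hi := h (f i) (hf i)
    simp only [pairDot, dotProduct_neg] at hi
    have h1 : (f i).2 ⬝ᵥ p.1 = p.1 ⬝ᵥ (f i).2 := dotProduct_comm _ _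
    have h2 : (f i).1 ⬝ᵥ p.2 = p.2 ⬝ᵥ (f i).1 := dotProduct_comm _ _
    rw [h1, h2] at hi
    exact mul_le_mul_of_nonneg_left (by linarith) (hc i)

lemma coneHull_rowPairs {m n : ℕ} (Z W : Matrix (Fin m) (Fin n) ℝ) :
    coneHull (rowPairsZW Z W) =
      {p | ∃ v : Fin m → ℝ, (∀ i, 0 ≤ v i) ∧
        p = (Matrix.vecMul v Z, -(Matrix.vecMul v W))} := by
  ext p
  constructor
  · rintro ⟨k, c, f, hc, hf, rfl⟩
    choose g hg using hf
    set v : Fin m → ℝ := fun j => ∑ i, if g i = j then c i else 0 with hvdef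
    have hv : ∀ j, 0 ≤ v j := fun j =>
      Finset.sum_nonneg fun i _ => by by_cases h : g i = j <;> simp [h, hc i]
    have key : ∀ (A : Matrix (Fin m) (Fin n) ℝ) (j : Fin n),
        Matrix.vecMul v A j = ∑ i, c i * A (g i) j := by
      intro A j
      simp only [hvdef, Matrix.vecMul, dotProduct, Finset.sum_mul]
      rw [Finset.sum_comm]
      refine Finset.sum_congr rfl fun i _ => ?_
      have hite : ∀ j' : Fin m, (if g i = j' then c i else 0) * A j' j
          = if g i = j' then c i * A j' j else 0 := fun j' => by
        by_cases h : g i = j' <;> simp [h]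
      rw [Finset.sum_congr rfl fun j' _ => hite j']
      simp [Finset.sum_ite_eq]
    refine ⟨v, hv, ?_⟩
    have h1 : (∑ i, c i • f i).1 = Matrix.vecMul v Z := by
      rw [Prod.fst_sum]; funext j
      rw [key Z j]
      simp only [Finset.sum_apply, Prod.smul_fst, Pi.smul_apply, smul_eq_mul]
      exact Finset.sum_congr rfl fun i _ => by simp [hg i]
    have h2 : (∑ i, c i • f i).2 = -(Matrix.vecMul v W) := by
      rw [Prod.snd_sum]; funext j
      simp only [Pi.neg_apply, key W j, Finset.sum_apply, Prod.smul_snd, Pi.smul_apply,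
        smul_eq_mul]
      rw [← Finset.sum_neg_distrib]
      refine Finset.sum_congr rfl fun i _ => ?_
      simp [hg i]
    exact Prod.ext h1 h2
  · rintro ⟨v, hv, rfl⟩
    refine ⟨m, v, fun i => (fun j => Z i j, fun j => -W i j), hv, fun i => ⟨i, rfl⟩, ?_⟩
    refine Prod.ext ?_ ?_
    · rw [Prod.fst_sum]
      funext j
      simp [Matrix.vecMul, dotProduct]
    · rw [Prod.snd_sum]
      funext j
      simp [Matrix.vecMul, dotProduct]

/-- Two representations of the graph of the negative dual process of `H_D`:
`graph(H_D^-) = {(W^⊤v, Z^⊤v) : v ∈ ℝ_+^ℓ} = {(x,y) : Y^⊤x - X^⊤y ∈ ℝ_-^T}`. -/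
theorem stmt13 {n T m : ℕ} (X Y : Matrix (Fin n) (Fin T) ℝ) (Z W : Matrix (Fin m) (Fin n) ℝ)
    (hZW : polarPos (colPairs X Y) = coneHull (rowPairsZW Z W)) :
    graphOf (dualNeg (mpup (colPairs X Y))) =
      {p | ∃ v : Fin m → ℝ, (∀ i, 0 ≤ v i) ∧ p = (Matrix.vecMul v W, Matrix.vecMul v Z)} ∧
    graphOf (dualNeg (mpup (colPairs X Y))) =
      {p | ∀ t, Matrix.vecMul p.1 Y t - Matrix.vecMul p.2 X t ≤ 0} := by
  constructor
  · ext p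
    rw [mem_graph_dualNeg_iff, hZW, coneHull_rowPairs]
    constructor
    · rintro ⟨v, hv, hp⟩
      refine ⟨v, hv, ?_⟩
      have h1 : p.2 = Matrix.vecMul v Z := congrArg Prod.fst hp
      have h2 : -p.1 = -(Matrix.vecMul v W) := congrArg Prod.snd hp
      have h2' : p.1 = Matrix.vecMul v W := by
        have := congrArg Neg.neg h2; simpa using this
      exact Prod.ext h2' h1
    · rintro ⟨v, hv, hp⟩
      exact ⟨v, hv, by rw [hp]⟩
  · ext p
    rw [mem_graph_dualNeg_iff]
    constructor
    · intro h t
      have := h (fun i => X i t, fun i => Y i t) ⟨t, rfl⟩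
      simp only [pairDot, dotProduct_neg] at this
      have h1 : Matrix.vecMul p.1 Y t = (fun i => Y i t) ⬝ᵥ p.1 := by
        simp [Matrix.vecMul, dotProduct, mul_comm]
      have h2 : Matrix.vecMul p.2 X t = (fun i => X i t) ⬝ᵥ p.2 := by
        simp [Matrix.vecMul, dotProduct, mul_comm]
      rw [h1, h2]; linarith
    · rintro h d ⟨t, rfl⟩
      have := h t
      simp only [pairDot, dotProduct_neg]
      have h1 : Matrix.vecMul p.1 Y t = (fun i => Y i t) ⬝ᵥ p.1 := by
        simp [Matrix.vecMul, dotProduct, mul_comm]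
      have h2 : Matrix.vecMul p.2 X t = (fun i => X i t) ⬝ᵥ p.2 := by
        simp [Matrix.vecMul, dotProduct, mul_comm]
      rw [h1, h2] at this; linarith
end

section
/- Let L : ℝ^n ⇒ ℝ^n be a linear process. Then the reachable set of L equals the n-fold image of the origin, R(L) = L^n({0}), and the feasible set of L equals the n-fold inverse image of the whole space, F(L) = L^{-n}(ℝ^n) = (L^{-1})^n(ℝ^n). -/
open Matrix Set Pointwise

section Aux
variable {n : ℕ}

lemma imageSV_mono (H : SVMap n) : Monotone (imageSV H) := by
  rintro S T h y ⟨x, hx, hy⟩; exact ⟨x, h hx, hy⟩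

lemma imageSV_coe (H : SVMap n) (S : Submodule ℝ ((Fin n → ℝ) × (Fin n → ℝ)))
    (hS : graphOf H = (S : Set _)) (P : Submodule ℝ (Fin n → ℝ)) :
    imageSV H (P : Set _) =
      (((S ⊓ P.prod ⊤).map (LinearMap.snd ℝ (Fin n → ℝ) (Fin n → ℝ)) :
        Submodule ℝ (Fin n → ℝ)) : Set _) := by
  ext y
  constructor
  · rintro ⟨x, hx, hy⟩
    have hxy : (x, y) ∈ (S : Set _) := by rw [← hS]; exact hy
    exact ⟨(x, y), ⟨hxy, hx, trivial⟩, rfl⟩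
  · rintro ⟨⟨a, b⟩, ⟨hmS, hmP, -⟩, rfl⟩
    refine ⟨a, hmP, ?_⟩
    have : (a, b) ∈ graphOf H := by rw [hS]; exact hmS
    exact this

lemma graph_invSV (H : SVMap n) (S : Submodule ℝ ((Fin n → ℝ) × (Fin n → ℝ)))
    (hS : graphOf H = (S : Set _)) :
    graphOf (invSV H) = ((S.map ((LinearMap.snd ℝ (Fin n → ℝ) (Fin n → ℝ)).prod
      (LinearMap.fst ℝ (Fin n → ℝ) (Fin n → ℝ))) : Submodule ℝ _) : Set _) := by
  ext ⟨a, b⟩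
  constructor
  · intro h
    have : (b, a) ∈ (S : Set _) := by rw [← hS]; exact h
    exact ⟨(b, a), this, rfl⟩
  · rintro ⟨⟨c, d⟩, hm, heq⟩
    have h1 : d = a := congrArg Prod.fst heq
    have h2 : c = b := congrArg Prod.snd heq
    subst h1 h2
    show (c, d) ∈ graphOf H
    rw [hS]; exact hm

lemma iter_submodule (G : SVMap n) (S : Submodule ℝ ((Fin n → ℝ) × (Fin n → ℝ)))
    (hS : graphOf G = (S : Set _)) (P0 : Submodule ℝ (Fin n → ℝ)) :
    ∀ q, ∃ P : Submodule ℝ (Fin n → ℝ), (imageSV G)^[q] (P0 : Set _) = (P : Set _) := by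
  intro q
  induction q with
  | zero => exact ⟨P0, rfl⟩
  | succ k ih =>
    obtain ⟨P, hP⟩ := ih
    refine ⟨(S ⊓ P.prod ⊤).map (LinearMap.snd ℝ (Fin n → ℝ) (Fin n → ℝ)), ?_⟩
    rw [Function.iterate_succ_apply', hP, imageSV_coe G S hS P]

lemma exists_stab (P : ℕ → Submodule ℝ (Fin n → ℝ))
    (hmono : ∀ q, P q ≤ P (q+1)) : ∃ q ≤ n, P q = P (q+1) := by
  by_contra h
  push_neg at h
  have key : ∀ q, q ≤ n + 1 → q ≤ Module.finrank ℝ (P q) := by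
    intro q
    induction q with
    | zero => intro _; omega
    | succ k ih =>
      intro hk
      have h1 : P k < P (k+1) := lt_of_le_of_ne (hmono k) (h k (by omega))
      have h2 := Submodule.finrank_lt_finrank_of_lt h1
      have h3 := ih (by omega)
      omega
  have h1 := key (n+1) le_rfl
  have h2 := Submodule.finrank_le (P (n+1))
  rw [Module.finrank_fin_fun] at h2
  omega

lemma exists_stab_anti (P : ℕ → Submodule ℝ (Fin n → ℝ))
    (hmono : ∀ q, P (q+1) ≤ P q) : ∃ q ≤ n, P q = P (q+1) := by
  by_contra h
  push_neg at h
  have key : ∀ q, q ≤ n + 1 → Module.finrank ℝ (P q) + q ≤ Module.finrank ℝ (P 0) := by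
    intro q
    induction q with
    | zero => intro _; omega
    | succ k ih =>
      intro hk
      have h1 : P (k+1) < P k := lt_of_le_of_ne (hmono k) (h k (by omega)).symm
      have h2 := Submodule.finrank_lt_finrank_of_lt h1
      have h3 := ih (by omega)
      omega
  have h1 := key (n+1) le_rfl
  have h2 := Submodule.finrank_le (P 0)
  rw [Module.finrank_fin_fun] at h2
  omega

lemma iter_stab {α : Type*} (g : Set α → Set α) (C : Set α) (q : ℕ)
    (h : g^[q] C = g^[q+1] C) : ∀ k, g^[q + k] C = g^[q] C := by
  intro k
  induction k with
  | zero => rfl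
  | succ k ih =>
    have he : q + (k+1) = (q + k) + 1 := rfl
    rw [he, Function.iterate_succ_apply', ih, ← Function.iterate_succ_apply' g q C, ← h]

lemma iter_le_of_le {α : Type*} (g : Set α → Set α) (hg : Monotone g) (C : Set α)
    (h : C ⊆ g C) : ∀ a b, a ≤ b → g^[a] C ⊆ g^[b] C := by
  have step : ∀ a, g^[a] C ⊆ g^[a+1] C := by
    intro a
    induction a with
    | zero => simpa using h
    | succ k ih =>
      rw [Function.iterate_succ_apply', Function.iterate_succ_apply']
      exact hg ih
  intro a b hab
  induction hab with
  | refl => exact subset_rfl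
  | @step m h ih => exact ih.trans (step m)

lemma reach_iff (L : SVMap n) (q : ℕ) (ξ : Fin n → ℝ) :
    ξ ∈ (imageSV L)^[q] {0} ↔
      ∃ x : ℕ → (Fin n → ℝ), x 0 = 0 ∧ x q = ξ ∧ ∀ k, k < q → x (k+1) ∈ L (x k) := by
  induction q generalizing ξ with
  | zero =>
    simp only [Function.iterate_zero, id_eq, Set.mem_singleton_iff]
    constructor
    · rintro rfl
      exact ⟨fun _ => 0, rfl, rfl, by omega⟩
    · rintro ⟨x, h0, hq, -⟩
      rw [← hq, h0]
  | succ q ih =>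
    rw [Function.iterate_succ_apply']
    constructor
    · rintro ⟨η, hη, hξ⟩
      obtain ⟨x, h0, hq, hstep⟩ := (ih η).mp hη
      refine ⟨fun k => if k = q+1 then ξ else x k, by simp [h0], by simp, ?_⟩
      intro k hk
      by_cases hkq : k = q
      · have e1 : x k = η := by rw [hkq]; exact hq
        show (if k + 1 = q + 1 then ξ else x (k+1)) ∈ L (if k = q + 1 then ξ else x k)
        rw [if_pos (show k + 1 = q + 1 by omega), if_neg (show ¬ k = q + 1 by omega), e1]
        exact hξ
      · simp only [if_neg (by omega : ¬ k + 1 = q + 1), if_neg (by omega : ¬ k = q + 1)]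
        exact hstep k (by omega)
    · rintro ⟨x, h0, hq, hstep⟩
      refine ⟨x q, (ih (x q)).mpr ⟨x, h0, rfl, fun k hk => hstep k (by omega)⟩, ?_⟩
      rw [← hq]
      exact hstep q (by omega)

lemma feas_iff (L : SVMap n) (q : ℕ) (ξ : Fin n → ℝ) :
    ξ ∈ (imageSV (invSV L))^[q] Set.univ ↔
      ∃ x : ℕ → (Fin n → ℝ), x 0 = ξ ∧ ∀ k, k < q → x (k+1) ∈ L (x k) := by
  induction q generalizing ξ with
  | zero =>
    simp only [Function.iterate_zero, id_eq, Set.mem_univ, true_iff]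
    exact ⟨fun _ => ξ, rfl, by omega⟩
  | succ q ih =>
    rw [Function.iterate_succ_apply']
    constructor
    · rintro ⟨y, hy, hξ⟩
      obtain ⟨x, h0, hstep⟩ := (ih y).mp hy
      refine ⟨fun k => if k = 0 then ξ else x (k-1), rfl, ?_⟩
      intro k hk
      match k with
      | 0 =>
        simp only [if_pos rfl, if_neg (by omega : ¬ (0:ℕ) + 1 = 0)]
        show x 0 ∈ L ξ
        rw [h0]
        exact hξ
      | Nat.succ j =>
        simp only [if_neg (by omega : ¬ j + 1 = 0), if_neg (by omega : ¬ j + 1 + 1 = 0)]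
        show x (j + 1 + 1 - 1) ∈ L (x (j + 1 - 1))
        simp only [Nat.add_sub_cancel]
        exact hstep j (by omega)
    · rintro ⟨x, h0, hstep⟩
      refine ⟨x 1, (ih (x 1)).mpr ⟨fun k => x (k+1), rfl, fun k hk => hstep (k+1) (by omega)⟩, ?_⟩
      show x 1 ∈ L ξ
      rw [← h0]
      exact hstep 0 (by omega)

end Aux

section Aux2
variable {n : ℕ}

lemma iter_ge_of_ge {α : Type*} (g : Set α → Set α) (hg : Monotone g) (C : Set α)
    (h : g C ⊆ C) : ∀ a b, a ≤ b → g^[b] C ⊆ g^[a] C := by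
  have step : ∀ a, g^[a+1] C ⊆ g^[a] C := by
    intro a
    induction a with
    | zero => simpa using h
    | succ k ih =>
      have h2 := hg ih
      rwa [← Function.iterate_succ_apply' g (k+1) C, ← Function.iterate_succ_apply' g k C] at h2
  intro a b hab
  induction hab with
  | refl => exact subset_rfl
  | @step m h ih => exact (step m).trans ih

end Aux2


/-- For a linear process `L`: `R(L) = L^n({0})` and `F(L) = L^{-n}(ℝ^n) = (L^{-1})^n(ℝ^n)`. -/
theorem stmt16 {n : ℕ} (L : SVMap n) (hL : IsLinearProcess L) :
    reachSet L = (imageSV L)^[n] {0} ∧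
    feasSet L = (imageSV (invSV L))^[n] Set.univ := by
  obtain ⟨S, hS⟩ := hL
  constructor
  · -- reachable set
    ext ξ
    constructor
    · rintro ⟨q, x, h0, hq, hstep⟩
      have hmem : ξ ∈ (imageSV L)^[q] {0} := (reach_iff L q ξ).mpr ⟨x, h0, hq, hstep⟩
      set g := imageSV L with hg
      set C : Set (Fin n → ℝ) := {0} with hCdef
      choose P hP using iter_submodule L S hS ⊥
      have hC : ∀ m, g^[m] C = (P m : Set _) := by
        intro m
        rw [hCdef, show ({0} : Set (Fin n → ℝ)) = ((⊥ : Submodule ℝ (Fin n → ℝ)) : Set _) by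
          simp]
        exact hP m
      have hsub : C ⊆ g C := by
        intro y hy
        rw [hCdef, Set.mem_singleton_iff] at hy
        subst hy
        refine ⟨0, rfl, ?_⟩
        have hz : ((0, 0) : (Fin n → ℝ) × (Fin n → ℝ)) ∈ (S : Set _) := S.zero_mem
        rw [← hS] at hz
        exact hz
      have hchain : ∀ a b, a ≤ b → g^[a] C ⊆ g^[b] C :=
        iter_le_of_le g (imageSV_mono L) C hsub
      have hPmono : ∀ m, P m ≤ P (m+1) := by
        intro m
        rw [← SetLike.coe_subset_coe, ← hC m, ← hC (m+1)]
        exact hchain m (m+1) (by omega)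
      obtain ⟨q0, hq0n, hq0⟩ := exists_stab P hPmono
      have hstabset : g^[q0] C = g^[q0+1] C := by rw [hC, hC, hq0]
      have hall : ∀ m, g^[m] C ⊆ g^[n] C := by
        intro m
        rcases le_or_gt m n with h | h
        · exact hchain m n h
        · have h1 : g^[m] C = g^[q0] C := by
            have := iter_stab g C q0 hstabset (m - q0)
            rwa [Nat.add_sub_cancel' (by omega)] at this
          have h2 : g^[n] C = g^[q0] C := by
            have := iter_stab g C q0 hstabset (n - q0)
            rwa [Nat.add_sub_cancel' hq0n] at this
          rw [h1, h2]
      exact hall q hmem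
    · intro hξ
      obtain ⟨x, h0, hq, hstep⟩ := (reach_iff L n ξ).mp hξ
      exact ⟨n, x, h0, hq, hstep⟩
  · -- feasible set
    ext ξ
    set g := imageSV (invSV L) with hg
    have hS' := graph_invSV L S hS
    choose P hP using iter_submodule (invSV L) _ hS' ⊤
    have hC : ∀ m, g^[m] Set.univ = (P m : Set _) := by
      intro m
      rw [show (Set.univ : Set (Fin n → ℝ)) = ((⊤ : Submodule ℝ (Fin n → ℝ)) : Set _) by simp]
      exact hP m
    have hchain : ∀ a b, a ≤ b → g^[b] Set.univ ⊆ g^[a] Set.univ :=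
      iter_ge_of_ge g (imageSV_mono (invSV L)) Set.univ (Set.subset_univ _)
    have hPanti : ∀ m, P (m+1) ≤ P m := by
      intro m
      rw [← SetLike.coe_subset_coe, ← hC m, ← hC (m+1)]
      exact hchain m (m+1) (by omega)
    obtain ⟨q0, hq0n, hq0⟩ := exists_stab_anti P hPanti
    have hstabset : g^[q0] Set.univ = g^[q0+1] Set.univ := by rw [hC, hC, hq0]
    have hBn : g^[n] Set.univ = g^[q0] Set.univ := by
      have := iter_stab g Set.univ q0 hstabset (n - q0)
      rwa [Nat.add_sub_cancel' hq0n] at this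
    have hfix : g (g^[q0] Set.univ) = g^[q0] Set.univ := by
      rw [← Function.iterate_succ_apply' g q0 Set.univ, ← hstabset]
    constructor
    · rintro ⟨x, h0, hstep⟩
      exact (feas_iff L n ξ).mpr ⟨x, h0, fun k _ => hstep k⟩
    · intro hξ
      have hmemB : ξ ∈ g^[q0] Set.univ := by rw [← hBn]; exact hξ
      have step : ∀ z : {v // v ∈ g^[q0] (Set.univ : Set (Fin n → ℝ))},
          ∃ y : {v // v ∈ g^[q0] (Set.univ : Set (Fin n → ℝ))}, (y : Fin n → ℝ) ∈ L z := by
        intro z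
        have hz : (z : Fin n → ℝ) ∈ imageSV (invSV L) (g^[q0] Set.univ) := by
          rw [show imageSV (invSV L) (g^[q0] (Set.univ : Set (Fin n → ℝ)))
              = g (g^[q0] Set.univ) from rfl, hfix]
          exact z.2
        obtain ⟨w, hw, hzw⟩ := hz
        exact ⟨⟨w, hw⟩, hzw⟩
      choose F hF using step
      refine ⟨fun k => (F^[k] ⟨ξ, hmemB⟩ : Fin n → ℝ), rfl, ?_⟩
      intro k
      show (F^[k+1] ⟨ξ, hmemB⟩ : Fin n → ℝ) ∈ L (F^[k] ⟨ξ, hmemB⟩ : Fin n → ℝ)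
      rw [Function.iterate_succ_apply' F k ⟨ξ, hmemB⟩]
      exact hF _
end

section
/- Let L : ℝ^n ⇒ ℝ^n be a linear process and let L^⊥ denote its dual linear process, defined by graph L^⊥ = {(b, −a) : (a,b) ∈ (graph L)^⊥}, where ⊥ denotes the orthogonal complement in ℝ^n × ℝ^n. Then F(L^⊥) = R(L)^⊥ and R(L^⊥) = F(L)^⊥. -/
open Matrix Set Pointwise

noncomputable section
namespace Stmt17Aux
open RealInnerProductSpace


variable {n : ℕ}

abbrev V (n : ℕ) := Fin n → ℝ

/-- flip as a linear equivalence -/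
def flipLE (n : ℕ) : (V n × V n) ≃ₗ[ℝ] (V n × V n) :=
  LinearEquiv.ofLinear
    ((LinearMap.snd ℝ (V n) (V n)).prod (-(LinearMap.fst ℝ (V n) (V n))))
    ((-(LinearMap.snd ℝ (V n) (V n))).prod (LinearMap.fst ℝ (V n) (V n)))
    (by apply LinearMap.ext; rintro ⟨a, b⟩; simp)
    (by apply LinearMap.ext; rintro ⟨a, b⟩; simp)

@[simp] lemma flipLE_apply (p : V n × V n) : flipLE n p = (p.2, -p.1) := rfl
@[simp] lemma flipLE_symm_apply (p : V n × V n) : (flipLE n).symm p = (-p.2, p.1) := rfl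

/-- orthogonal complement of a submodule of the pair space, w.r.t. pairDot -/
def perpSub (S : Submodule ℝ (V n × V n)) : Submodule ℝ (V n × V n) where
  carrier := {q | ∀ p ∈ S, pairDot p q = 0}
  zero_mem' := by intro p _; simp [pairDot]
  add_mem' := by
    intro a b ha hb p hp
    have h1 := ha p hp; have h2 := hb p hp
    simp only [pairDot, Prod.fst_add, Prod.snd_add, dotProduct_add] at *
    linarith
  smul_mem' := by
    intro c a ha p hp
    have h1 := ha p hp
    simp only [pairDot, Prod.smul_fst, Prod.smul_snd, dotProduct_smul, smul_eq_mul] at *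
    rw [← mul_add, h1, mul_zero]

lemma mem_perpSub {S : Submodule ℝ (V n × V n)} {q : V n × V n} :
    q ∈ perpSub S ↔ ∀ p ∈ S, pairDot p q = 0 := Iff.rfl

/-- orthogonal complement in `V n` -/
def perpV (U : Submodule ℝ (V n)) : Submodule ℝ (V n) where
  carrier := {x | ∀ y ∈ U, x ⬝ᵥ y = 0}
  zero_mem' := by intro y _; simp
  add_mem' := by
    intro a b ha hb y hy
    rw [add_dotProduct, ha y hy, hb y hy, add_zero]
  smul_mem' := by
    intro c a ha y hy
    rw [smul_dotProduct, ha y hy, smul_zero]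

lemma mem_perpV {U : Submodule ℝ (V n)} {x : V n} :
    x ∈ perpV U ↔ ∀ y ∈ U, x ⬝ᵥ y = 0 := Iff.rfl

lemma perpV_antitone {U W : Submodule ℝ (V n)} (h : U ≤ W) : perpV W ≤ perpV U :=
  fun _ hx y hy => hx y (h hy)

/-- the isometry-like equivalence to Euclidean space -/
def toE (n : ℕ) : (V n × V n) ≃ₗ[ℝ] EuclideanSpace ℝ (Fin n ⊕ Fin n) :=
  (LinearEquiv.sumArrowLequivProdArrow (Fin n) (Fin n) ℝ ℝ).symm ≪≫ₗ
    (WithLp.linearEquiv 2 ℝ ((Fin n ⊕ Fin n) → ℝ)).symm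

lemma inner_toE (p q : V n × V n) : (inner ℝ (toE n p) (toE n q) : ℝ) = pairDot p q := by
  obtain ⟨p1, p2⟩ := p
  obtain ⟨q1, q2⟩ := q
  simp only [toE, LinearEquiv.trans_apply, PiLp.inner_apply, RCLike.inner_apply,
    starRingEnd_apply, star_trivial]
  rw [Fintype.sum_sum_type]
  simp [pairDot, dotProduct, WithLp.linearEquiv, mul_comm]

lemma map_toE_perpSub (S : Submodule ℝ (V n × V n)) :
    Submodule.map (toE n).toLinearMap (perpSub S) = (Submodule.map (toE n).toLinearMap S)ᗮ := by
  ext z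
  rw [Submodule.mem_map_equiv, Submodule.mem_orthogonal]
  constructor
  · rintro h u hu
    rw [Submodule.mem_map_equiv] at hu
    have h2 := h _ hu
    calc (inner ℝ u z : ℝ)
        = inner ℝ (toE n ((toE n).symm u)) (toE n ((toE n).symm z)) := by
          rw [(toE n).apply_symm_apply, (toE n).apply_symm_apply]
      _ = pairDot ((toE n).symm u) ((toE n).symm z) := inner_toE _ _
      _ = 0 := h2
  · intro h p hp
    have hm : (toE n) p ∈ Submodule.map (toE n).toLinearMap S := ⟨p, hp, rfl⟩
    have h2 := h _ hm
    rw [← inner_toE, (toE n).apply_symm_apply]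
    exact h2

lemma perpSub_perpSub (S : Submodule ℝ (V n × V n)) : perpSub (perpSub S) = S := by
  have hinj : Function.Injective (Submodule.map (toE n).toLinearMap) :=
    Submodule.map_injective_of_injective (toE n).injective
  apply hinj
  rw [map_toE_perpSub, map_toE_perpSub, Submodule.orthogonal_orthogonal]

lemma orth_inf {E : Type*} [NormedAddCommGroup E] [InnerProductSpace ℝ E]
    [FiniteDimensional ℝ E] (K K' : Submodule ℝ E) : (K ⊓ K')ᗮ = Kᗮ ⊔ K'ᗮ := by
  have h : K ⊓ K' = (Kᗮ ⊔ K'ᗮ)ᗮ := by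
    rw [← Submodule.inf_orthogonal, Submodule.orthogonal_orthogonal,
      Submodule.orthogonal_orthogonal]
  rw [h, Submodule.orthogonal_orthogonal]

lemma perpSub_inf (A B : Submodule ℝ (V n × V n)) :
    perpSub (A ⊓ B) = perpSub A ⊔ perpSub B := by
  have hinj : Function.Injective (Submodule.map (toE n).toLinearMap) :=
    Submodule.map_injective_of_injective (toE n).injective
  apply hinj
  rw [Submodule.map_sup, map_toE_perpSub, map_toE_perpSub, map_toE_perpSub,
    Submodule.map_inf (toE n).toLinearMap (toE n).injective, orth_inf]


lemma perpSub_prod_top (U : Submodule ℝ (V n)) :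
    perpSub (U.prod ⊤) = (perpV U).prod ⊥ := by
  ext ⟨q1, q2⟩
  constructor
  · intro h
    have h2 : q2 = 0 := by
      have := h (0, q2) (by simp [Submodule.mem_prod])
      simp only [pairDot, zero_dotProduct] at this
      exact dotProduct_self_eq_zero.mp (by linarith)
    refine Submodule.mem_prod.mpr ⟨?_, by simp [h2]⟩
    intro y hy
    have := h (y, 0) (Submodule.mem_prod.mpr ⟨hy, trivial⟩)
    simp only [pairDot, zero_dotProduct, add_zero] at this
    rw [dotProduct_comm]; exact this
  · intro h
    rintro ⟨p1, p2⟩ hp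
    rw [Submodule.mem_prod] at h hp
    have h2 : q2 = 0 := by simpa using h.2
    have h1 : q1 ∈ perpV U := h.1
    simp only [pairDot, h2, dotProduct_zero, add_zero]
    rw [dotProduct_comm]; exact h1 p1 hp.1

lemma perpSub_top_prod (U : Submodule ℝ (V n)) :
    perpSub ((⊤ : Submodule ℝ (V n)).prod U) = (⊥ : Submodule ℝ (V n)).prod (perpV U) := by
  ext ⟨q1, q2⟩
  constructor
  · intro h
    have h1 : q1 = 0 := by
      have := h (q1, 0) (by simp [Submodule.mem_prod])
      simp only [pairDot, zero_dotProduct, add_zero] at this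
      exact dotProduct_self_eq_zero.mp this
    refine Submodule.mem_prod.mpr ⟨by simp [h1], ?_⟩
    intro y hy
    have := h (0, y) (Submodule.mem_prod.mpr ⟨trivial, hy⟩)
    simp only [pairDot, zero_dotProduct, zero_add] at this
    rw [dotProduct_comm]; exact this
  · intro h
    rintro ⟨p1, p2⟩ hp
    rw [Submodule.mem_prod] at h hp
    have h1 : q1 = 0 := by simpa using h.1
    have h2 : q2 ∈ perpV U := h.2
    simp only [pairDot, h1, dotProduct_zero, zero_add]
    rw [dotProduct_comm]; exact h2 p2 hp.2

/-- image of a submodule under the linear relation `S` -/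
def relImg (S : Submodule ℝ (V n × V n)) (U : Submodule ℝ (V n)) : Submodule ℝ (V n) where
  carrier := {y | ∃ x ∈ U, (x, y) ∈ S}
  zero_mem' := ⟨0, U.zero_mem, S.zero_mem⟩
  add_mem' := by
    rintro a b ⟨x, hx, hs⟩ ⟨x', hx', hs'⟩
    exact ⟨x + x', U.add_mem hx hx', S.add_mem hs hs'⟩
  smul_mem' := by
    rintro c a ⟨x, hx, hs⟩
    exact ⟨c • x, U.smul_mem c hx, S.smul_mem c hs⟩

/-- preimage of a submodule under the linear relation `S` -/
def relPre (S : Submodule ℝ (V n × V n)) (U : Submodule ℝ (V n)) : Submodule ℝ (V n) where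
  carrier := {x | ∃ y ∈ U, (x, y) ∈ S}
  zero_mem' := ⟨0, U.zero_mem, S.zero_mem⟩
  add_mem' := by
    rintro a b ⟨y, hy, hs⟩ ⟨y', hy', hs'⟩
    exact ⟨y + y', U.add_mem hy hy', S.add_mem hs hs'⟩
  smul_mem' := by
    rintro c a ⟨y, hy, hs⟩
    exact ⟨c • y, U.smul_mem c hy, S.smul_mem c hs⟩

lemma mem_relImg {S : Submodule ℝ (V n × V n)} {U : Submodule ℝ (V n)} {y : V n} :
    y ∈ relImg S U ↔ ∃ x ∈ U, (x, y) ∈ S := Iff.rfl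

lemma mem_relPre {S : Submodule ℝ (V n × V n)} {U : Submodule ℝ (V n)} {x : V n} :
    x ∈ relPre S U ↔ ∃ y ∈ U, (x, y) ∈ S := Iff.rfl

lemma relPre_mono {S : Submodule ℝ (V n × V n)} {U W : Submodule ℝ (V n)} (h : U ≤ W) :
    relPre S U ≤ relPre S W := by
  rintro x ⟨y, hy, hs⟩; exact ⟨y, h hy, hs⟩

/-- the graph of the dual process, as a submodule -/
def flipS (S : Submodule ℝ (V n × V n)) : Submodule ℝ (V n × V n) :=
  Submodule.map (flipLE n).toLinearMap (perpSub S)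

lemma mem_flipS {S : Submodule ℝ (V n × V n)} {q p : V n} :
    (q, p) ∈ flipS S ↔ (-p, q) ∈ perpSub S := by
  rw [flipS, Submodule.mem_map_equiv]
  rfl

lemma relPre_flip (S : Submodule ℝ (V n × V n)) (U : Submodule ℝ (V n)) :
    relPre (flipS S) (perpV U) = perpV (relImg S U) := by
  ext q
  constructor
  · rintro ⟨p, hp, hqp⟩ y ⟨x, hxU, hxyS⟩
    rw [mem_flipS] at hqp
    have h1 := hqp (x, y) hxyS
    simp only [pairDot] at h1
    have h2 : p ⬝ᵥ x = 0 := hp x hxU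
    rw [dotProduct_comm] 
    rw [dotProduct_neg, dotProduct_comm x p, h2, neg_zero, zero_add] at h1
    exact h1
  · intro hq
    have h0 : (0, q) ∈ perpSub (S ⊓ U.prod ⊤) := by
      rintro ⟨x, y⟩ hxy
      rw [Submodule.mem_inf, Submodule.mem_prod] at hxy
      simp only [pairDot, dotProduct_zero, zero_add]
      rw [dotProduct_comm]
      exact hq y ⟨x, hxy.2.1, hxy.1⟩
    rw [perpSub_inf, perpSub_prod_top, Submodule.mem_sup] at h0
    obtain ⟨a, haS, b, hb, hab⟩ := h0
    rw [Submodule.mem_prod] at hb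
    have hb2 : b.2 = 0 := by simpa using hb.2
    have ha : a = (-b.1, q) := by
      have h1 := congrArg Prod.fst hab
      have h2 := congrArg Prod.snd hab
      simp only [Prod.fst_add, Prod.snd_add, hb2, add_zero] at h1 h2
      exact Prod.ext_iff.mpr ⟨add_eq_zero_iff_eq_neg.mp h1, h2⟩
    exact ⟨b.1, hb.1, mem_flipS.mpr (ha ▸ haS)⟩

lemma relImg_flip (S : Submodule ℝ (V n × V n)) (U : Submodule ℝ (V n)) :
    relImg (flipS S) (perpV U) = perpV (relPre S U) := by
  ext p
  constructor
  · rintro ⟨qq, hqq, hmem⟩ x ⟨y, hyU, hxyS⟩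
    rw [mem_flipS] at hmem
    have h1 := hmem (x, y) hxyS
    simp only [pairDot] at h1
    have h2 : qq ⬝ᵥ y = 0 := hqq y hyU
    rw [dotProduct_comm y qq, h2, add_zero, dotProduct_neg, neg_eq_zero, dotProduct_comm] at h1
    exact h1
  · intro hp
    have h0 : (p, 0) ∈ perpSub (S ⊓ (⊤ : Submodule ℝ (V n)).prod U) := by
      rintro ⟨x, y⟩ hxy
      rw [Submodule.mem_inf, Submodule.mem_prod] at hxy
      simp only [pairDot, dotProduct_zero, add_zero]
      rw [dotProduct_comm]
      exact hp x ⟨y, hxy.2.2, hxy.1⟩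
    rw [perpSub_inf, perpSub_top_prod, Submodule.mem_sup] at h0
    obtain ⟨a, haS, b, hb, hab⟩ := h0
    rw [Submodule.mem_prod] at hb
    have hb1 : b.1 = 0 := by simpa using hb.1
    have ha : a = (p, -b.2) := by
      have h1 := congrArg Prod.fst hab
      have h2 := congrArg Prod.snd hab
      simp only [Prod.fst_add, Prod.snd_add, hb1, add_zero] at h1 h2
      exact Prod.ext_iff.mpr ⟨h1, add_eq_zero_iff_eq_neg.mp h2⟩
    have hna : (-p, b.2) ∈ perpSub S := by
      have := (perpSub S).neg_mem haS
      rw [ha] at this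
      simpa using this
    exact ⟨b.2, hb.2, mem_flipS.mpr hna⟩


/-- reachable chain -/
def Rchain (S : Submodule ℝ (V n × V n)) (q : ℕ) : Submodule ℝ (V n) :=
  Nat.rec ⊥ (fun _ ih => relImg S ih) q

/-- feasibility chain -/
def Dchain (S : Submodule ℝ (V n × V n)) (q : ℕ) : Submodule ℝ (V n) :=
  Nat.rec ⊤ (fun _ ih => relPre S ih) q

lemma Rchain_zero (S : Submodule ℝ (V n × V n)) : Rchain S 0 = ⊥ := rfl
lemma Rchain_succ (S : Submodule ℝ (V n × V n)) (q : ℕ) :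
    Rchain S (q + 1) = relImg S (Rchain S q) := rfl
lemma Dchain_zero (S : Submodule ℝ (V n × V n)) : Dchain S 0 = ⊤ := rfl
lemma Dchain_succ (S : Submodule ℝ (V n × V n)) (q : ℕ) :
    Dchain S (q + 1) = relPre S (Dchain S q) := rfl

lemma Dchain_antitone (S : Submodule ℝ (V n × V n)) : Antitone (Dchain S) := by
  apply antitone_nat_of_succ_le
  intro q
  induction q with
  | zero => exact le_top
  | succ q ih =>
    rw [Dchain_succ, Dchain_succ]
    exact relPre_mono ih

lemma exists_stab (S : Submodule ℝ (V n × V n)) :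
    ∃ N, ∀ m, N ≤ m → Dchain S m = Dchain S N := by
  obtain ⟨N, hN⟩ := IsArtinian.monotone_stabilizes
    (⟨fun q => OrderDual.toDual (Dchain S q),
      fun a b hab => OrderDual.toDual_le_toDual.mpr (Dchain_antitone S hab)⟩ :
      ℕ →o (Submodule ℝ (V n))ᵒᵈ)
  exact ⟨N, fun m hm => (OrderDual.toDual_inj.mp (hN m hm)).symm⟩

lemma Dchain_flipS (S : Submodule ℝ (V n × V n)) (q : ℕ) :
    Dchain (flipS S) q = perpV (Rchain S q) := by
  induction q with
  | zero =>
    rw [Dchain_zero, Rchain_zero]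
    ext x
    constructor
    · intro _ y hy
      rw [Submodule.mem_bot] at hy
      rw [hy, dotProduct_zero]
    · intro _
      trivial
  | succ q ih =>
    rw [Dchain_succ, Rchain_succ, ih, relPre_flip]

lemma Rchain_flipS (S : Submodule ℝ (V n × V n)) (q : ℕ) :
    Rchain (flipS S) q = perpV (Dchain S q) := by
  induction q with
  | zero =>
    rw [Rchain_zero, Dchain_zero]
    ext x
    constructor
    · intro hx y _
      rw [Submodule.mem_bot] at hx
      rw [hx, zero_dotProduct]
    · intro hx
      rw [Submodule.mem_bot]
      exact dotProduct_self_eq_zero.mp (hx x trivial)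
  | succ q ih =>
    rw [Rchain_succ, Dchain_succ, ih, relImg_flip]

section Traj

variable {H : SVMap n} {S : Submodule ℝ ((Fin n → ℝ) × (Fin n → ℝ))}

lemma traj_mem_Rchain (hG : ∀ x y, y ∈ H x ↔ (x, y) ∈ S) (q : ℕ) (x : ℕ → (Fin n → ℝ))
    (h0 : x 0 = 0) (hstep : ∀ k, k < q → x (k + 1) ∈ H (x k)) : x q ∈ Rchain S q := by
  induction q with
  | zero => rw [h0]; exact (Rchain S 0).zero_mem
  | succ q ih =>
    rw [Rchain_succ]
    exact ⟨x q, ih (fun k hk => hstep k (hk.trans (Nat.lt_succ_self q))),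
      (hG _ _).mp (hstep q (Nat.lt_succ_self q))⟩

lemma Rchain_traj (hG : ∀ x y, y ∈ H x ↔ (x, y) ∈ S) (q : ℕ) :
    ∀ ξ ∈ Rchain S q, ∃ x : ℕ → (Fin n → ℝ),
      x 0 = 0 ∧ x q = ξ ∧ ∀ k, k < q → x (k + 1) ∈ H (x k) := by
  induction q with
  | zero =>
    intro ξ hξ
    rw [Rchain_zero, Submodule.mem_bot] at hξ
    exact ⟨fun _ => 0, rfl, hξ.symm, fun k hk => absurd hk (Nat.not_lt_zero k)⟩
  | succ q ih =>
    intro ξ hξ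
    rw [Rchain_succ] at hξ
    obtain ⟨η, hη, hS⟩ := hξ
    obtain ⟨y, hy0, hyq, hystep⟩ := ih η hη
    refine ⟨fun k => if k = q + 1 then ξ else y k, ?_, ?_, ?_⟩
    · show (if 0 = q + 1 then ξ else y 0) = 0
      rw [if_neg (by omega), hy0]
    · show (if q + 1 = q + 1 then ξ else y (q + 1)) = ξ
      rw [if_pos rfl]
    · intro k hk
      rcases Nat.lt_succ_iff_lt_or_eq.mp hk with h | h
      · show (if k + 1 = q + 1 then ξ else y (k + 1)) ∈ H (if k = q + 1 then ξ else y k)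
        rw [if_neg (by omega), if_neg (by omega)]
        exact hystep k h
      · subst h
        show (if k + 1 = k + 1 then ξ else y (k + 1)) ∈ H (if k = k + 1 then ξ else y k)
        rw [if_pos rfl, if_neg (by omega), hyq]
        exact (hG _ _).mpr hS

lemma traj_mem_Dchain (hG : ∀ x y, y ∈ H x ↔ (x, y) ∈ S) (q : ℕ) (x : ℕ → (Fin n → ℝ))
    (hstep : ∀ k, x (k + 1) ∈ H (x k)) : x 0 ∈ Dchain S q := by
  induction q generalizing x with
  | zero => trivial
  | succ q ih =>
    rw [Dchain_succ]
    exact ⟨x 1, ih (fun k => x (k + 1)) (fun k => hstep (k + 1)), (hG _ _).mp (hstep 0)⟩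

lemma Dchain_stab_traj (hG : ∀ x y, y ∈ H x ↔ (x, y) ∈ S) (N : ℕ)
    (hstab : Dchain S (N + 1) = Dchain S N) :
    ∀ ξ ∈ Dchain S N, ∃ x : ℕ → (Fin n → ℝ), x 0 = ξ ∧ ∀ k, x (k + 1) ∈ H (x k) := by
  intro ξ hξ
  have hstep : ∀ v : {v // v ∈ Dchain S N},
      ∃ w : {v // v ∈ Dchain S N}, ((v : Fin n → ℝ), (w : Fin n → ℝ)) ∈ S := by
    rintro ⟨v, hv⟩
    have hv' : v ∈ relPre S (Dchain S N) := by
      rw [← Dchain_succ, hstab]; exact hv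
    obtain ⟨w, hw, hs⟩ := hv'
    exact ⟨⟨w, hw⟩, hs⟩
  choose f hf using hstep
  refine ⟨fun k => (f^[k] ⟨ξ, hξ⟩ : Fin n → ℝ), by simp, ?_⟩
  intro k
  show ((f^[k + 1] ⟨ξ, hξ⟩ : Fin n → ℝ)) ∈ H (f^[k] ⟨ξ, hξ⟩ : Fin n → ℝ)
  rw [Function.iterate_succ_apply' f k _]
  exact (hG _ _).mpr (hf _)

lemma reachSet_eq (hG : ∀ x y, y ∈ H x ↔ (x, y) ∈ S) :
    reachSet H = ⋃ q, (Rchain S q : Set (Fin n → ℝ)) := by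
  ext ξ
  simp only [reachSet, Set.mem_iUnion, SetLike.mem_coe, Set.mem_setOf_eq]
  constructor
  · rintro ⟨q, x, h0, hq, hstep⟩
    exact ⟨q, hq ▸ traj_mem_Rchain hG q x h0 hstep⟩
  · rintro ⟨q, hq⟩
    obtain ⟨x, h0, hxq, hstep⟩ := Rchain_traj hG q ξ hq
    exact ⟨q, x, h0, hxq, hstep⟩

lemma feasSet_subset (hG : ∀ x y, y ∈ H x ↔ (x, y) ∈ S) (q : ℕ) :
    feasSet H ⊆ (Dchain S q : Set (Fin n → ℝ)) := by
  rintro ξ ⟨x, h0, hstep⟩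
  exact h0 ▸ traj_mem_Dchain hG q x hstep

lemma feasSet_eq (hG : ∀ x y, y ∈ H x ↔ (x, y) ∈ S) (N : ℕ)
    (hstab : Dchain S (N + 1) = Dchain S N) :
    feasSet H = (Dchain S N : Set (Fin n → ℝ)) := by
  apply Set.Subset.antisymm (feasSet_subset hG N)
  intro ξ hξ
  obtain ⟨x, h0, hstep⟩ := Dchain_stab_traj hG N hstab ξ hξ
  exact ⟨x, h0, hstep⟩

end Traj

lemma orthVec_coe (U : Submodule ℝ (V n)) :
    orthVec (U : Set (Fin n → ℝ)) = (perpV U : Set (Fin n → ℝ)) := rfl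

lemma orthVec_iUnion (A : ℕ → Set (Fin n → ℝ)) :
    orthVec (⋃ q, A q) = ⋂ q, orthVec (A q) := by
  ext x
  simp only [orthVec, Set.mem_iInter, Set.mem_setOf_eq, Set.mem_iUnion]
  exact ⟨fun h q y hy => h y ⟨q, hy⟩, fun h y hy => by obtain ⟨q, hq⟩ := hy; exact h q y hq⟩

end Stmt17Aux
end

/-- For a linear process `L` and its dual `L^⊥`: `F(L^⊥) = R(L)^⊥` and `R(L^⊥) = F(L)^⊥`. -/
theorem stmt17 {n : ℕ} (L : SVMap n) (hL : IsLinearProcess L) :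
    feasSet (perpProcess L) = orthVec (reachSet L) ∧
    reachSet (perpProcess L) = orthVec (feasSet L) := by
  classical
  obtain ⟨S, hS⟩ := hL
  have hG : ∀ x y, y ∈ L x ↔ (x, y) ∈ S := by
    intro x y
    have h1 : (x, y) ∈ graphOf L ↔ (x, y) ∈ (S : Set _) := by rw [hS]
    simpa [graphOf] using h1
  have hG' : ∀ x y, y ∈ perpProcess L x ↔ (x, y) ∈ Stmt17Aux.flipS S := by
    intro x y
    show (x, y) ∈ flipMap '' orthPair (graphOf L) ↔ _
    rw [hS]
    constructor
    · rintro ⟨⟨a, b⟩, hab, heq⟩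
      obtain ⟨h1, h2⟩ := Prod.ext_iff.mp heq
      simp only [flipMap] at h1 h2
      have ha : a = -y := by rw [← h2, neg_neg]
      have hab' : (a, b) ∈ Stmt17Aux.perpSub S := fun p hp => hab p hp
      rw [ha, h1] at hab'
      exact Stmt17Aux.mem_flipS.mpr hab'
    · intro hm
      rw [Stmt17Aux.mem_flipS] at hm
      refine ⟨(-y, x), fun p hp => hm p hp, ?_⟩
      simp [flipMap]
  constructor
  · -- feasSet (perpProcess L) = orthVec (reachSet L)
    obtain ⟨N', hN'⟩ := Stmt17Aux.exists_stab (Stmt17Aux.flipS S)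
    have hstab' : Stmt17Aux.Dchain (Stmt17Aux.flipS S) (N' + 1) =
        Stmt17Aux.Dchain (Stmt17Aux.flipS S) N' := hN' (N' + 1) (Nat.le_succ _)
    have hfeq := Stmt17Aux.feasSet_eq hG' N' hstab'
    have hcap : feasSet (perpProcess L) =
        ⋂ q, (Stmt17Aux.Dchain (Stmt17Aux.flipS S) q : Set (Fin n → ℝ)) := by
      apply Set.Subset.antisymm
      · exact Set.subset_iInter (Stmt17Aux.feasSet_subset hG')
      · intro ξ hξ
        rw [hfeq]
        exact (Set.iInter_subset (fun q =>
          (Stmt17Aux.Dchain (Stmt17Aux.flipS S) q : Set (Fin n → ℝ))) N') hξ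
    rw [hcap, Stmt17Aux.reachSet_eq hG, Stmt17Aux.orthVec_iUnion]
    exact Set.iInter_congr fun q => by
      rw [Stmt17Aux.orthVec_coe, Stmt17Aux.Dchain_flipS]
  · -- reachSet (perpProcess L) = orthVec (feasSet L)
    obtain ⟨N, hN⟩ := Stmt17Aux.exists_stab S
    have hstab : Stmt17Aux.Dchain S (N + 1) = Stmt17Aux.Dchain S N := hN (N + 1) (Nat.le_succ _)
    have hfeqL := Stmt17Aux.feasSet_eq hG N hstab
    rw [Stmt17Aux.reachSet_eq hG', hfeqL, Stmt17Aux.orthVec_coe]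
    apply Set.Subset.antisymm
    · apply Set.iUnion_subset
      intro q
      rw [Stmt17Aux.Rchain_flipS]
      rcases le_total q N with h | h
      · exact Stmt17Aux.perpV_antitone (Stmt17Aux.Dchain_antitone S h)
      · rw [hN q h]
    · intro ξ hξ
      apply Set.mem_iUnion.mpr ⟨N, ?_⟩
      rw [Stmt17Aux.Rchain_flipS]
      exact hξ
end
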